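/- Let H = K₃ × K₄ be the graph on pairs (i, j) with i ∈ {1,2,3}, j ∈ {1,2,3,4}, where (i₁, j₁) is adjacent to (i₂, j₂) if and only if i₁ ≠ i₂ and j₁ ≠ j₂, and let β be the proper 4-coloring of H assigning to each vertex (i, j) the color j. Then for every pair of distinct colors a, b ∈ {1,2,3,4}, the subgraph of H induced by the vertices colored a or b under β is connected. -/

import Mathlib

open SimpleGraph

/-- The spanning subgraph of `G` consisting of the edges both of whose endpoints
receive color `i` or color `j` under `φ`. -/
def kempeSubgraph {V : Type*} (G : SimpleGraph V) {k : ℕ} (φ : V → Fin k) (i j : Fin k) :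
    SimpleGraph V where
  Adj u v := G.Adj u v ∧ (φ u = i ∨ φ u = j) ∧ (φ v = i ∨ φ v = j)
  symm := ⟨fun u v ⟨h, hu, hv⟩ => ⟨h.symm, hv, hu⟩⟩
  loopless := ⟨fun v h => G.loopless.irrefl v h.1⟩

/-- `ψ` is obtained from `φ` by a single `i,j`-Kempe swap:  the colors `i` and `j` are
interchanged on the connected component (of the subgraph induced by colors `i,j`)
containing `w`, and nothing else changes. -/
def IsKempeSwap {V : Type*} (G : SimpleGraph V) {k : ℕ}
    (φ ψ : G.Coloring (Fin k)) : Prop :=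
  ∃ (i j : Fin k) (w : V), ∀ v : V,
    ((kempeSubgraph G (fun x => φ x) i j).Reachable w v → ψ v = Equiv.swap i j (φ v)) ∧
    (¬ (kempeSubgraph G (fun x => φ x) i j).Reachable w v → ψ v = φ v)

/-- Kempe `k`-equivalence of proper `k`-colorings:  one can be transformed into the
other by a sequence of Kempe swaps. -/
def KempeEquiv {V : Type*} (G : SimpleGraph V) (k : ℕ)
    (φ ψ : G.Coloring (Fin k)) : Prop :=
  Relation.EqvGen (IsKempeSwap G) φ ψ

/-- `Kc G k` is the number of Kempe equivalence classes of proper `k`-colorings of `G`. -/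
noncomputable def Kc {V : Type*} (G : SimpleGraph V) (k : ℕ) : ℕ :=
  Nat.card (Quot (KempeEquiv G k))

/-- `G` can be obtained from a bipartite graph by adding `ℓ` edges. -/
def BipartitePlus {V : Type*} (G : SimpleGraph V) (ℓ : ℕ) : Prop :=
  ∃ E : Finset (Sym2 V), E.card = ℓ ∧ ↑E ⊆ G.edgeSet ∧
    (G.deleteEdges ↑E).Colorable 2

/-- `K₃ × K₄`: the categorical (tensor) product of complete graphs, on
`Fin 3 × Fin 4`, where `(i₁,j₁)` is adjacent to `(i₂,j₂)` iff `i₁ ≠ i₂` and `j₁ ≠ j₂`. -/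
def Htensor : SimpleGraph (Fin 3 × Fin 4) where
  Adj p q := p.1 ≠ q.1 ∧ p.2 ≠ q.2
  symm := ⟨fun p q h => ⟨h.1.symm, h.2.symm⟩⟩
  loopless := ⟨fun p h => h.1 rfl⟩

/-- The vertices of `Ĥ`: pairs `(i,j)` with `i ∈ Fin 3`, `j ∈ Fin 4`, excluding the
three "diagonal" pairs (which correspond to `(1,1), (2,2), (3,3)` in the 1-indexed
description). -/
abbrev HhatVert : Type := {p : Fin 3 × Fin 4 // (p.1 : ℕ) ≠ (p.2 : ℕ)}

/-- The graph `Ĥ`, i.e. `K₃ × K₄` with the three diagonal vertices deleted. -/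
def Hhat : SimpleGraph HhatVert where
  Adj p q := p.1.1 ≠ q.1.1 ∧ p.1.2 ≠ q.1.2
  symm := ⟨fun p q h => ⟨h.1.symm, h.2.symm⟩⟩
  loopless := ⟨fun p h => h.1 rfl⟩

/-- For the coloring `β` of `H = K₃ × K₄` assigning to each vertex its second
coordinate, and any two distinct colors `a, b`, the subgraph of `H` induced by the
vertices colored `a` or `b` is connected. -/
theorem stmt6 (a b : Fin 4) (hab : a ≠ b) :
    (Htensor.induce {p : Fin 3 × Fin 4 | p.2 = a ∨ p.2 = b}).Connected := by
  have third : ∀ i i' : Fin 3, ∃ k : Fin 3, k ≠ i ∧ k ≠ i' := by decide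
  have hne : Nonempty {p : Fin 3 × Fin 4 // p ∈ {p : Fin 3 × Fin 4 | p.2 = a ∨ p.2 = b}} :=
    ⟨⟨(0, a), Or.inl rfl⟩⟩
  refine ⟨?_⟩
  rintro ⟨⟨i, c⟩, hu⟩ ⟨⟨i', c'⟩, hv⟩
  by_cases hc : c = c'
  · subst hc
    by_cases hi : i = i'
    · subst hi; exact Reachable.refl _
    · -- same color, different first coordinate: go through the other color
      have hcb : ∃ d : Fin 4, (d = a ∨ d = b) ∧ d ≠ c := by
        rcases hu with h | h
        · exact ⟨b, Or.inr rfl, fun e => hab (h ▸ e.symm)⟩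
        · exact ⟨a, Or.inl rfl, fun e => hab (e.trans h)⟩
      obtain ⟨d, hd, hdc⟩ := hcb
      obtain ⟨k, hk1, hk2⟩ := third i i'
      have h1 : (Htensor.induce {p : Fin 3 × Fin 4 | p.2 = a ∨ p.2 = b}).Adj
          ⟨(i, c), hu⟩ ⟨(k, d), hd⟩ := (⟨hk1.symm, hdc.symm⟩ : _ ∧ _)
      have h2 : (Htensor.induce {p : Fin 3 × Fin 4 | p.2 = a ∨ p.2 = b}).Adj
          ⟨(k, d), hd⟩ ⟨(i', c), hv⟩ := (⟨hk2, hdc⟩ : _ ∧ _)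
      exact (h1.reachable).trans h2.reachable
  · by_cases hi : i = i'
    · subst hi
      -- same first coordinate, different colors: path of length 3
      obtain ⟨j, hj1, _⟩ := third i i
      obtain ⟨k, hk1, hk2⟩ := third i j
      have h1 : (Htensor.induce {p : Fin 3 × Fin 4 | p.2 = a ∨ p.2 = b}).Adj
          ⟨(i, c), hu⟩ ⟨(j, c'), hv⟩ := (⟨hj1.symm, hc⟩ : _ ∧ _)
      have h2 : (Htensor.induce {p : Fin 3 × Fin 4 | p.2 = a ∨ p.2 = b}).Adj
          ⟨(j, c'), hv⟩ ⟨(k, c), hu⟩ := (⟨hk2.symm, fun h => hc h.symm⟩ : _ ∧ _)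
      have h3 : (Htensor.induce {p : Fin 3 × Fin 4 | p.2 = a ∨ p.2 = b}).Adj
          ⟨(k, c), hu⟩ ⟨(i, c'), hv⟩ := (⟨hk1, hc⟩ : _ ∧ _)
      exact ((h1.reachable).trans h2.reachable).trans h3.reachable
    · exact SimpleGraph.Adj.reachable (by exact (⟨hi, hc⟩ : _ ∧ _))
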